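/- Let λ > 0, μ > 0 and x, y ∈ ℝ, and set z = √(λ+μ)·(y−x). Then N(y)^{−1}·M(y)·M(x)^{−1}·N(x) equals (1/√(λ(λ+μ))) times the 2×2 matrix with entries: (1,1) entry e^{√λ(x−y)}·[√λ·cosh(z/2) + √(λ+μ)·sinh(z/2)]·[√(λ+μ)·cosh(z/2) + √λ·sinh(z/2)]; (1,2) entry μ·e^{−√λ(x+y)}·cosh(z/2)·sinh(z/2); (2,1) entry −μ·e^{√λ(x+y)}·cosh(z/2)·sinh(z/2); (2,2) entry e^{√λ(y−x)}·[√λ·cosh(z/2) − √(λ+μ)·sinh(z/2)]·[√(λ+μ)·cosh(z/2) − √λ·sinh(z/2)]. -/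

import Mathlib

open Matrix Real

/-- The fundamental matrix `N(x)` associated with parameter `λ`:
`N(x) = ((e^{√λ x}, e^{−√λ x}), (√λ e^{√λ x}, −√λ e^{−√λ x}))`.
The matrix `M(x)` of the paper is `Nmat (λ+μ) x`. -/
noncomputable def Nmat (lam x : ℝ) : Matrix (Fin 2) (Fin 2) ℝ :=
  !![Real.exp (Real.sqrt lam * x), Real.exp (-(Real.sqrt lam * x));
     Real.sqrt lam * Real.exp (Real.sqrt lam * x),
       -(Real.sqrt lam * Real.exp (-(Real.sqrt lam * x)))]

lemma Nmat_inv (L x : ℝ) (hL : 0 < L) :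
    (Nmat L x)⁻¹ =
      !![Real.exp (-(Real.sqrt L * x)) / 2, Real.exp (-(Real.sqrt L * x)) / (2 * Real.sqrt L);
         Real.exp (Real.sqrt L * x) / 2, -(Real.exp (Real.sqrt L * x) / (2 * Real.sqrt L))] := by
  have hs : Real.sqrt L ≠ 0 := by positivity
  have h1 : Real.exp (Real.sqrt L * x) * Real.exp (-(Real.sqrt L * x)) = 1 := by
    rw [← Real.exp_add]; simp
  apply Matrix.inv_eq_right_inv
  ext i j
  fin_cases i <;> fin_cases j <;>
    simp [Nmat, Matrix.mul_apply, Fin.sum_univ_two, Real.exp_neg] <;>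
    field_simp <;> ring

set_option maxHeartbeats 1000000 in
/-- the explicit form of `N(y)⁻¹ M(y) M(x)⁻¹ N(x)`,
with `z = √(λ+μ)(y−x)`. -/
theorem statement9 (lam mu x y : ℝ) (hlam : 0 < lam) (hmu : 0 < mu)
    (z : ℝ) (hz : z = Real.sqrt (lam + mu) * (y - x)) :
    (Nmat lam y)⁻¹ * Nmat (lam + mu) y * (Nmat (lam + mu) x)⁻¹ * Nmat lam x =
      (1 / Real.sqrt (lam * (lam + mu))) •
        !![Real.exp (Real.sqrt lam * (x - y)) *
              ((Real.sqrt lam * Real.cosh (z / 2) + Real.sqrt (lam + mu) * Real.sinh (z / 2)) *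
                (Real.sqrt (lam + mu) * Real.cosh (z / 2) + Real.sqrt lam * Real.sinh (z / 2))),
            mu * Real.exp (-(Real.sqrt lam * (x + y))) * Real.cosh (z / 2) * Real.sinh (z / 2);
          -(mu * Real.exp (Real.sqrt lam * (x + y)) * Real.cosh (z / 2) * Real.sinh (z / 2)),
            Real.exp (Real.sqrt lam * (y - x)) *
              ((Real.sqrt lam * Real.cosh (z / 2) - Real.sqrt (lam + mu) * Real.sinh (z / 2)) *
                (Real.sqrt (lam + mu) * Real.cosh (z / 2) - Real.sqrt lam * Real.sinh (z / 2)))] := by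
  have hlm : (0:ℝ) < lam + mu := by linarith
  subst hz
  rw [Nmat_inv lam y hlam, Nmat_inv (lam + mu) x hlm, Real.sqrt_mul hlam.le]
  simp only [Nmat]
  set a := Real.sqrt lam with haa
  set b := Real.sqrt (lam + mu) with hbb
  have ha : 0 < a := Real.sqrt_pos.2 hlam
  have hb : 0 < b := Real.sqrt_pos.2 hlm
  have ha2 : a * a = lam := Real.mul_self_sqrt hlam.le
  have hb2 : b * b = lam + mu := Real.mul_self_sqrt hlm.le
  have hmu2 : mu = b * b - a * a := by rw [ha2, hb2]; ring
  have h1 : Real.exp (a * (x - y)) = Real.exp (a * x) * (Real.exp (a * y))⁻¹ := by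
    rw [← Real.exp_neg, ← Real.exp_add]; congr 1; ring
  have h2 : Real.exp (a * (y - x)) = Real.exp (a * y) * (Real.exp (a * x))⁻¹ := by
    rw [← Real.exp_neg, ← Real.exp_add]; congr 1; ring
  have h3 : Real.exp (-(a * (x + y))) = (Real.exp (a * x))⁻¹ * (Real.exp (a * y))⁻¹ := by
    rw [← Real.exp_neg, ← Real.exp_neg, ← Real.exp_add]; congr 1; ring
  have h4 : Real.exp (a * (x + y)) = Real.exp (a * x) * Real.exp (a * y) := by
    rw [← Real.exp_add]; congr 1; ring
  have h5 : Real.exp (-(a * x)) = (Real.exp (a * x))⁻¹ := Real.exp_neg _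
  have h6 : Real.exp (-(a * y)) = (Real.exp (a * y))⁻¹ := Real.exp_neg _
  have h7 : Real.exp (-(b * x)) = (Real.exp (b * x))⁻¹ := Real.exp_neg _
  have h8 : Real.exp (-(b * y)) = (Real.exp (b * y))⁻¹ := Real.exp_neg _
  have h9 : Real.exp (b * y) =
      Real.exp (b * (y - x) / 2) * Real.exp (b * (y - x) / 2) * Real.exp (b * x) := by
    rw [← Real.exp_add, ← Real.exp_add]; congr 1; ring
  have h10 : Real.exp (-(b * (y - x) / 2)) = (Real.exp (b * (y - x) / 2))⁻¹ := Real.exp_neg _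
  have u1 : Real.exp (a * x) ≠ 0 := Real.exp_ne_zero _
  have u2 : Real.exp (a * y) ≠ 0 := Real.exp_ne_zero _
  have u3 : Real.exp (b * x) ≠ 0 := Real.exp_ne_zero _
  have u4 : Real.exp (b * (y - x) / 2) ≠ 0 := Real.exp_ne_zero _
  have ha0 : a ≠ 0 := ha.ne'
  have hb0 : b ≠ 0 := hb.ne'
  ext i j
  fin_cases i <;> fin_cases j <;>
    · simp only [Matrix.mul_apply, Fin.sum_univ_two, Matrix.smul_apply, smul_eq_mul,
        Real.cosh_eq, Real.sinh_eq, Matrix.cons_val', Matrix.cons_val_zero, Matrix.cons_val_one,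
        Matrix.head_cons, Matrix.head_fin_const, Matrix.empty_val', Matrix.cons_val_fin_one,
        Matrix.of_apply, Fin.isValue, Fin.zero_eta, Fin.mk_one]
      simp only [hmu2, h1, h2, h3, h4, h5, h6, h7, h8, h9, h10]
      field_simp
      ring
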